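/- arXiv:2402.08956 — 5 statements merged into one kernel-verified Lean document; each statement's English description precedes it below -/
import Mathlib

section
/- Let f : V → V be a forwarding function on a finite vertex set V with designated destination d such that f(d) = d, and consider the directed graph with an edge from v to f(v) for every v ≠ d. Then every vertex reaches d by iterating f if and only if the underlying undirected graph on edges {v, f(v)} for v ≠ d is connected. -/
/-- Every vertex reaches the destination `d` by iterating the forwarding function `f`
iff the underlying undirected graph (with an edge between `v` and `f v` for each
`v ≠ d`) is connected. -/
theorem stmt2 {V : Type} [Fintype V] [Nonempty V] (f : V → V) (d : V) (hd : f d = d) :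
    (∀ v : V, ∃ k : ℕ, f^[k] v = d) ↔
      (SimpleGraph.fromRel (fun a b => a ≠ d ∧ b = f a)).Connected := by
  set G := SimpleGraph.fromRel (fun a b => a ≠ d ∧ b = f a) with hG
  constructor
  · intro hreach
    have key : ∀ k v, f^[k] v = d → G.Reachable v d := by
      intro k
      induction k with
      | zero => intro v hv; subst hv; exact SimpleGraph.Reachable.refl v
      | succ n ih =>
        intro v hv
        by_cases hvd : v = d
        · subst hvd; exact SimpleGraph.Reachable.refl v
        · have hne : v ≠ f v := by
            intro h
            apply hvd
            have := Function.iterate_fixed h.symm (n + 1)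
            rw [← this, hv]
          have hadj : G.Adj v (f v) := by
            rw [hG, SimpleGraph.fromRel_adj]
            exact ⟨hne, Or.inl ⟨hvd, rfl⟩⟩
          rw [Function.iterate_succ_apply] at hv
          exact hadj.reachable.trans (ih (f v) hv)
    exact SimpleGraph.Connected.mk
      (fun a b => ((hreach a).elim fun k hk => key k a hk).trans
        ((hreach b).elim fun k hk => key k b hk).symm)
  · intro hconn
    have key2 : ∀ ⦃x y : V⦄, G.Walk x y → (∃ k, f^[k] y = d) → ∃ k, f^[k] x = d := by
      intro x y p
      induction p with
      | nil => exact id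
      | cons h p ih =>
        intro hy
        obtain ⟨k, hk⟩ := ih hy
        rw [hG, SimpleGraph.fromRel_adj] at h
        obtain ⟨hne, ⟨hxd, hyx⟩ | ⟨hyd, hxy⟩⟩ := h
        · exact ⟨k + 1, by rw [Function.iterate_succ_apply, ← hyx, hk]⟩
        · cases k with
          | zero => exact absurd hk hyd
          | succ m =>
            rw [Function.iterate_succ_apply] at hk
            exact ⟨m, hxy ▸ hk⟩
    exact fun v => key2 (hconn.preconnected v d).some ⟨0, rfl⟩
end

section
/- Incremental loop-detection correctness (safe case): Let f : V → V with f(d) = d be loop-free (every vertex reaches d). Let x ∈ V with x ≠ d and u ∈ V, and define the updated forwarding function f' by f'(x) = u and f'(v) = f(v) for v ≠ x. If u is not in the set A = {v ∈ V : some f-path from v to d passes through x} (equivalently, u reaches d under f without passing through x), then f' is also loop-free: every vertex reaches d under f'. -/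
lemma stmt10_agree {V : Type} [DecidableEq V] (f : V → V) (x u : V) :
    ∀ m (v : V), (∀ j < m, f^[j] v ≠ x) → (Function.update f x u)^[m] v = f^[m] v := by
  intro m
  induction m with
  | zero => intro v _; rfl
  | succ m ih =>
    intro v hv
    have hv0 : v ≠ x := by simpa using hv 0 (Nat.succ_pos m)
    have h1 : Function.update f x u v = f v := Function.update_of_ne hv0 u f
    rw [Function.iterate_succ_apply, Function.iterate_succ_apply, h1]
    exact ih (f v) (fun j hj => by
      have := hv (j + 1) (Nat.succ_lt_succ hj)
      simpa [Function.iterate_succ_apply] using this)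

/-- Incremental loop-detection correctness (safe case): if `f` is loop-free and the
new next hop `u` of `x` reaches `d` under `f` without passing through `x`, then the
updated forwarding function is also loop-free. -/
theorem stmt10 {V : Type} [Fintype V] [DecidableEq V] (f : V → V) (d : V) (hd : f d = d)
    (hloopfree : ∀ v : V, ∃ k : ℕ, f^[k] v = d)
    (x : V) (hx : x ≠ d) (u : V)
    (hu : ∃ k : ℕ, f^[k] u = d ∧ ∀ j : ℕ, j ≤ k → f^[j] u ≠ x) :
    ∀ v : V, ∃ k : ℕ, (Function.update f x u)^[k] v = d := by
  obtain ⟨k', hk'd, hk'x⟩ := hu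
  -- x reaches d under f'
  have hxd : (Function.update f x u)^[k' + 1] x = d := by
    rw [Function.iterate_succ_apply, Function.update_self]
    rw [stmt10_agree f x u k' u (fun j hj => hk'x j (le_of_lt hj))]
    exact hk'd
  intro v
  obtain ⟨k, hk⟩ := hloopfree v
  by_cases hhit : ∃ j ≤ k, f^[j] v = x
  · classical
    obtain ⟨j, hjk, hjx⟩ := hhit
    have hex : ∃ j, f^[j] v = x := ⟨j, hjx⟩
    set j0 := Nat.find hex with hj0
    have hj0x : f^[j0] v = x := Nat.find_spec hex
    have hlt : ∀ i < j0, f^[i] v ≠ x := fun i hi => Nat.find_min hex hi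
    refine ⟨(k' + 1) + j0, ?_⟩
    rw [Function.iterate_add_apply, stmt10_agree f x u j0 v hlt, hj0x, hxd]
  · push_neg at hhit
    refine ⟨k, ?_⟩
    rw [stmt10_agree f x u k v (fun i hi => hhit i (le_of_lt hi))]
    exact hk
end

section
/- Incremental loop-detection correctness (loop case): With notation as above, if u ∈ A, i.e., every f'-path from u toward d would pass through x (equivalently, u's path to d under the original f passes through x), then under the updated function f' the vertex x lies on a cycle not containing d, and hence x does not reach d under f'. -/
/-- Incremental loop-detection correctness (loop case): if the new next hop `u` of
`x` has its `f`-path to `d` passing through `x`, then under the updated function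
`x` lies on a cycle not containing `d`, and hence `x` never reaches `d`. -/
theorem stmt11 {V : Type} [Fintype V] [DecidableEq V] (f : V → V) (d : V) (hd : f d = d)
    (hloopfree : ∀ v : V, ∃ k : ℕ, f^[k] v = d)
    (x : V) (hx : x ≠ d) (u : V)
    (hu : ∃ j : ℕ, f^[j] u = x ∧ ∀ i : ℕ, i ≤ j → f^[i] u ≠ d) :
    (∃ k : ℕ, 1 ≤ k ∧ (Function.update f x u)^[k] x = x) ∧
      (∀ i : ℕ, (Function.update f x u)^[i] x ≠ d) := by
  classical
  obtain ⟨j, hjx, hjd⟩ := hu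
  set f' := Function.update f x u with hf'
  have hP : ∃ j, f^[j] u = x := ⟨j, hjx⟩
  set j₀ := Nat.find hP with hj₀def
  have hj₀x : f^[j₀] u = x := Nat.find_spec hP
  have hj₀le : j₀ ≤ j := Nat.find_min' hP hjx
  have hfx : f' x = u := by simp [hf']
  have key : ∀ i ≤ j₀, f'^[i] u = f^[i] u := by
    intro i hi
    induction i with
    | zero => simp
    | succ n ih =>
      rw [Function.iterate_succ_apply', Function.iterate_succ_apply',
        ih (Nat.le_of_succ_le hi)]
      have hne : f^[n] u ≠ x := Nat.find_min hP (by omega)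
      simp [hf', Function.update_apply, hne]
  have hxstep : f'^[j₀ + 1] x = x := by
    rw [Function.iterate_succ_apply, hfx, key j₀ le_rfl, hj₀x]
  have hcycle : ∀ q, f'^[q * (j₀ + 1)] x = x := by
    intro q
    induction q with
    | zero => simp
    | succ n ih =>
      rw [Nat.succ_mul, Function.iterate_add_apply, hxstep, ih]
  refine ⟨⟨j₀ + 1, by omega, hxstep⟩, ?_⟩
  intro i
  have hrep : f'^[i] x = f'^[i % (j₀ + 1)] x := by
    conv_lhs => rw [← Nat.mod_add_div i (j₀ + 1)]
    rw [Function.iterate_add_apply, mul_comm, hcycle]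
  rw [hrep]
  have hr : i % (j₀ + 1) < j₀ + 1 := Nat.mod_lt _ (by omega)
  set r := i % (j₀ + 1) with hrdef
  rcases r with _ | s
  · simpa using hx
  · rw [Function.iterate_succ_apply, hfx, key s (by omega)]
    exact hjd s (by omega)
end

section
/- Incremental verification suffices: With f loop-free, x ≠ d, and f' the single-edge update f'(x) = u, the updated forwarding state f' is loop-free (all vertices reach d under f') if and only if x reaches d under f'. That is, checking only the path of the updating node x suffices to verify global loop-freedom. -/
/-- Incremental verification suffices: for a loop-free `f` and a single-edge update
`f' = f[x ↦ u]` with `x ≠ d`, the updated state is loop-free iff `x` itself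
reaches `d` under `f'`. -/
theorem stmt12 {V : Type} [Fintype V] [DecidableEq V] (f : V → V) (d : V) (hd : f d = d)
    (hloopfree : ∀ v : V, ∃ k : ℕ, f^[k] v = d)
    (x : V) (hx : x ≠ d) (u : V) :
    (∀ v : V, ∃ k : ℕ, (Function.update f x u)^[k] v = d) ↔
      (∃ k : ℕ, (Function.update f x u)^[k] x = d) := by
  constructor
  · intro h; exact h x
  · intro hx' v
    obtain ⟨k, hk⟩ := hloopfree v
    induction k generalizing v with
    | zero => exact ⟨0, hk⟩
    | succ k ih =>
      by_cases hvx : v = x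
      · subst hvx; exact hx'
      · obtain ⟨m, hm⟩ := ih (f v) (by simpa [Function.iterate_succ_apply] using hk)
        exact ⟨m + 1, by rw [Function.iterate_succ_apply, Function.update_of_ne hvx, hm]⟩
end

section
/- Waypoint characterization: Let f : V → V with f(d) = d and suppose v reaches d under f, with k the least index such that f^k(v) = d. Then a vertex w lies on the forwarding path from v to d if and only if f^j(v) = w for some j ≤ k, and this holds if and only if w reaches d under f and the least index k_w with f^{k_w}(w) = d satisfies k_w ≤ k and f^{k - k_w}(v) = w. -/
/-- Waypoint characterization: `w` lies on the forwarding path from `v` to `d`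
(i.e. `w = f^[j] v` for some `j ≤ k`, with `k` minimal such that `f^[k] v = d`)
iff `w` reaches `d` with minimal hop count `k_w ≤ k` and `f^[k - k_w] v = w`. -/
theorem stmt16 {V : Type} [Fintype V] (f : V → V) (d : V) (hd : f d = d)
    (v : V) (k : ℕ) (hk : f^[k] v = d) (hkmin : ∀ j : ℕ, j < k → f^[j] v ≠ d)
    (w : V) :
    (∃ j : ℕ, j ≤ k ∧ f^[j] v = w) ↔
      (∃ kw : ℕ, f^[kw] w = d ∧ (∀ j : ℕ, j < kw → f^[j] w ≠ d) ∧
        kw ≤ k ∧ f^[k - kw] v = w) := by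
  constructor
  · rintro ⟨j, hj, rfl⟩
    refine ⟨k - j, ?_, ?_, Nat.sub_le _ _, ?_⟩
    · rw [← Function.iterate_add_apply, Nat.sub_add_cancel hj, hk]
    · intro i hi h
      exact hkmin (i + j) (by omega) (by rw [Function.iterate_add_apply, h])
    · rw [Nat.sub_sub_self hj]
  · rintro ⟨kw, h1, h2, h3, h4⟩
    exact ⟨k - kw, Nat.sub_le _ _, h4⟩
end
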